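/- Let B be the finite Blaschke product with zeros \(a_1,\dots,a_N\in\mathbb D\). A function \(\psi\in H^\infty\) satisfies that \(\psi/B\) is real-valued a.e. on the unit circle if and only if \(\psi(z)=p(z)\prod_{j=1}^N(1-\overline{a_j}z)^{-2}\) for some N-symmetric polynomial p. -/

import Mathlib

open MeasureTheory Complex Filter Topology
open scoped Real ComplexConjugate

noncomputable section

instance : Fact (0 < 2 * π) := ⟨by positivity⟩

/-- Normalized arc length (Haar) measure on the circle `ℝ / 2πℤ`. -/
abbrev μT : Measure (AddCircle (2 * π)) := AddCircle.haarAddCircle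

/-- The boundary point `e^{iθ}` corresponding to `θ ∈ ℝ / 2πℤ`. -/
def bpt (θ : AddCircle (2 * π)) : ℂ := fourier 1 θ

/-- The Hardy space `H¹`, viewed as the subset of `L¹` of the circle consisting of
functions whose negative Fourier coefficients vanish. -/
def HardySet : Set (Lp ℂ 1 μT) :=
  {f | ∀ n : ℤ, n < 0 → fourierCoeff (⇑f) n = 0}

/-- A boundary function is inner if it lies in `H¹` (equivalently `H^∞`) and has
unimodular boundary values a.e. -/
def InnerFn (I : AddCircle (2 * π) → ℂ) : Prop :=
  Integrable I μT ∧ (∀ᵐ θ ∂μT, ‖I θ‖ = 1) ∧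
    ∀ n : ℤ, n < 0 → fourierCoeff I n = 0

/-- A boundary function is outer if it lies in `H¹`, does not vanish at the origin
(i.e. has nonzero mean), `log|F|` is integrable, and `log|F(0)| = ∫ log|F|`. -/
def OuterFn (F : AddCircle (2 * π) → ℂ) : Prop :=
  Integrable F μT ∧ (∀ n : ℤ, n < 0 → fourierCoeff F n = 0) ∧
    fourierCoeff F 0 ≠ 0 ∧
    Integrable (fun θ => Real.log (‖F θ‖)) μT ∧
    Real.log (‖fourierCoeff F 0‖) = ∫ θ, Real.log (‖F θ‖) ∂μT

/-- The punctured Hardy space `H¹_K`: `H¹` functions whose Fourier coefficients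
vanish on the finite set `K`. -/
def HardyKSet (K : Finset ℕ) : Set (Lp ℂ 1 μT) :=
  {f | (∀ n : ℤ, n < 0 → fourierCoeff (⇑f) n = 0) ∧ ∀ k ∈ K, fourierCoeff (⇑f) (k : ℤ) = 0}

def coeffZ (p : Polynomial ℂ) (j : ℤ) : ℂ := if 0 ≤ j then p.coeff j.toNat else 0

def NSymm (N : ℕ) (p : Polynomial ℂ) : Prop :=
  ∀ k : ℤ, coeffZ p ((N : ℤ) - k) = conj (coeffZ p ((N : ℤ) + k))

/-! ### Auxiliary lemmas -/

open scoped NNReal ENNReal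

lemma abs_fourier (n : ℤ) (θ : AddCircle (2 * π)) : ‖fourier n θ‖ = 1 := by
  rw [fourier_apply]; exact Circle.norm_coe _

lemma abs_bpt (θ : AddCircle (2 * π)) : ‖bpt θ‖ = 1 := abs_fourier 1 θ

lemma fourier_eq_exp (n : ℤ) (x : ℝ) :
    fourier n (x : AddCircle (2 * π)) = Complex.exp ((n : ℂ) * x * I) := by
  rw [fourier_coe_apply]
  congr 1
  have : (2 * (π:ℂ)) ≠ 0 := by simp [Real.pi_ne_zero]
  field_simp
  push_cast
  ring

lemma bpt_coe (x : ℝ) : bpt (x : AddCircle (2 * π)) = Complex.exp (x * I) := by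
  rw [bpt, fourier_eq_exp]; norm_num

lemma fourier_npow (n : ℕ) (θ : AddCircle (2 * π)) :
    fourier (n : ℤ) θ = (bpt θ) ^ n := by
  induction θ using QuotientAddGroup.induction_on with
  | H x =>
    rw [fourier_eq_exp, bpt_coe, ← Complex.exp_nat_mul]
    congr 1; push_cast; ring

lemma continuous_bpt : Continuous bpt := (fourier 1).continuous

lemma fourierCoeff_congr_ae' {f g : AddCircle (2 * π) → ℂ} (h : f =ᵐ[μT] g) (n : ℤ) :
    fourierCoeff f n = fourierCoeff g n := by
  unfold fourierCoeff
  exact integral_congr_ae (h.mono fun θ hθ => by simp only [hθ])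

lemma fourierCoeff_conj (f : AddCircle (2 * π) → ℂ) (n : ℤ) :
    fourierCoeff (fun θ => conj (f θ)) n = conj (fourierCoeff f (-n)) := by
  unfold fourierCoeff
  rw [← integral_conj]
  congr 1
  ext θ
  rw [smul_eq_mul, smul_eq_mul, map_mul, neg_neg, ← fourier_neg]

lemma fourierCoeff_fourier_mul (f : AddCircle (2 * π) → ℂ) (m n : ℤ) :
    fourierCoeff (fun θ => fourier m θ * f θ) n = fourierCoeff f (n - m) := by
  unfold fourierCoeff
  congr 1
  ext θ
  have : -(n - m) = -n + m := by ring
  rw [smul_eq_mul, smul_eq_mul, ← mul_assoc, ← fourier_add, this]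

lemma rbpt_eq_circleMap (r x : ℝ) : (r : ℂ) * bpt x = circleMap 0 r x := by
  rw [bpt_coe, circleMap, zero_add]

lemma hasFPS {g : ℂ → ℂ} (hg : DifferentiableOn ℂ g (Metric.ball 0 1))
    {r : ℝ} (h0 : 0 < r) (h1 : r < 1) :
    HasFPowerSeriesOnBall g (cauchyPowerSeries g 0 r) 0 (r.toNNReal : ℝ≥0∞) := by
  have hsub : Metric.closedBall (0:ℂ) r ⊆ Metric.ball 0 1 := Metric.closedBall_subset_ball h1
  have hco : ((r.toNNReal : ℝ)) = r := Real.coe_toNNReal r h0.le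
  have hd : DifferentiableOn ℂ g (Metric.closedBall 0 (r.toNNReal : ℝ)) := by
    rw [hco]; exact hg.mono hsub
  have := hd.hasFPowerSeriesOnBall (by simpa using h0)
  rwa [hco] at this

lemma cauchy_coeff_indep {g : ℂ → ℂ} (hg : DifferentiableOn ℂ g (Metric.ball 0 1))
    {r : ℝ} (h0 : 0 < r) (h1 : r < 1) :
    cauchyPowerSeries g 0 r = cauchyPowerSeries g 0 (1/2) := by
  have ha := (hasFPS hg h0 h1).hasFPowerSeriesAt
  have hb := (hasFPS hg (by norm_num : (0:ℝ) < 1/2) (by norm_num)).hasFPowerSeriesAt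
  exact ha.eq_formalMultilinearSeries hb

lemma fourierCoeff_circle {g : ℂ → ℂ} (hg : DifferentiableOn ℂ g (Metric.ball 0 1))
    {r : ℝ} (h0 : 0 < r) (h1 : r < 1) (n : ℤ) :
    fourierCoeff (fun θ : AddCircle (2*π) => g ((r : ℂ) * bpt θ)) n =
      if 0 ≤ n then cauchyPowerSeries g 0 (1/2) n.toNat (fun _ => 1) * (r:ℂ) ^ n.toNat else 0 := by
  have hre : (r:ℂ) ≠ 0 := Complex.ofReal_ne_zero.mpr h0.ne'
  rw [fourierCoeff_eq_intervalIntegral _ n 0, zero_add]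
  set J := ∫ x in (0:ℝ)..2*π, fourier (-n) (x : AddCircle (2*π)) • g ((r:ℂ) * bpt x) with hJ
  rcases lt_or_ge n 0 with hn | hn
  · rw [if_neg (not_le.mpr hn)]
    set m : ℕ := (-n - 1).toNat with hm
    have hnm : (-n : ℂ) = (m : ℂ) + 1 := by
      have : (-n : ℤ) = (m : ℤ) + 1 := by omega
      exact_mod_cast congrArg (Int.cast : ℤ → ℂ) this
    have hzero : (∮ z in C(0, r), z ^ m * g z) = 0 := by
      apply circleIntegral_eq_zero_of_differentiable_on_off_countable h0.le Set.countable_empty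
      · exact ((continuous_pow m).continuousOn).mul
          ((hg.mono (Metric.closedBall_subset_ball h1)).continuousOn)
      · intro z hz
        have hz1 : z ∈ Metric.ball (0:ℂ) 1 := Metric.ball_subset_ball h1.le hz.1
        exact (differentiableAt_pow m).mul (hg.differentiableAt (Metric.isOpen_ball.mem_nhds hz1))
    have hunfold : (∮ z in C(0, r), z ^ m * g z)
        = (I * (r:ℂ) ^ (m+1)) * J := by
      rw [circleIntegral, hJ, ← intervalIntegral.integral_const_mul]
      apply intervalIntegral.integral_congr
      intro x _
      dsimp only
      rw [deriv_circleMap, smul_eq_mul, ← rbpt_eq_circleMap, fourier_eq_exp]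
      have hexp : Complex.exp ((↑(-n) : ℂ) * x * I) = Complex.exp ((x:ℂ) * I) ^ (m + 1) := by
        rw [← Complex.exp_nat_mul]
        congr 1
        push_cast [hnm]
        ring
      rw [bpt_coe, smul_eq_mul, hexp, mul_pow]
      ring
    have hz2 : (I * (r:ℂ) ^ (m+1)) * J = 0 := by rw [← hunfold, hzero]
    have hJ0 : J = 0 := by
      have hne : (I * (r:ℂ) ^ (m+1)) ≠ 0 :=
        mul_ne_zero Complex.I_ne_zero (pow_ne_zero _ hre)
      exact (mul_eq_zero.mp hz2).resolve_left hne
    rw [hJ0, smul_zero]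
  · rw [if_pos hn]
    set k : ℕ := n.toNat with hk
    have hnk : (n : ℤ) = (k : ℤ) := by omega
    have happ := cauchyPowerSeries_apply g 0 r k 1
    have hunfold : (∮ z in C(0, r), ((1:ℂ) / (z - 0)) ^ k • (z - 0)⁻¹ • g z)
        = (I * ((r:ℂ) ^ k)⁻¹) * J := by
      rw [circleIntegral, hJ, ← intervalIntegral.integral_const_mul]
      apply intervalIntegral.integral_congr
      intro x _
      dsimp only
      rw [deriv_circleMap, smul_eq_mul, smul_eq_mul, smul_eq_mul, ← rbpt_eq_circleMap,
        fourier_eq_exp, bpt_coe, smul_eq_mul]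
      have hexpne : Complex.exp ((x:ℂ) * I) ≠ 0 := Complex.exp_ne_zero _
      have hexp : Complex.exp ((↑(-n) : ℂ) * x * I) = (Complex.exp ((x:ℂ) * I) ^ k)⁻¹ := by
        rw [← Complex.exp_nat_mul, ← Complex.exp_neg]
        congr 1
        have : (↑(-n) : ℂ) = -(k:ℂ) := by rw [hnk]; push_cast; ring
        rw [this]; ring
      rw [hexp, sub_zero]
      field_simp
      have e1 : (r:ℂ) ^ k * (r:ℂ)⁻¹ ^ k = 1 := by rw [← mul_pow, mul_inv_cancel₀ hre, one_pow]
      have e2 : Complex.exp ((x:ℂ) * I) ^ k * (Complex.exp ((x:ℂ) * I))⁻¹ ^ k = 1 := by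
        rw [← mul_pow, mul_inv_cancel₀ hexpne, one_pow]
      linear_combination (Complex.exp ((x:ℂ) * I) ^ k * (Complex.exp ((x:ℂ) * I))⁻¹ ^ k
        * g ((r:ℂ) * Complex.exp ((x:ℂ) * I))) * e1 + g ((r:ℂ) * Complex.exp ((x:ℂ) * I)) * e2
    rw [hunfold] at happ
    have hcoeq : cauchyPowerSeries g 0 (1/2) k (fun _ => 1)
        = cauchyPowerSeries g 0 r k (fun _ => 1) := by
      rw [cauchy_coeff_indep hg h0 h1]
    rw [hcoeq, happ]
    have hIne : (2 * (π:ℂ) * I) ≠ 0 := by simp [Real.pi_ne_zero, Complex.I_ne_zero]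
    have hrk : ((r:ℂ) ^ k) ≠ 0 := pow_ne_zero _ hre
    have hπ : ((π:ℝ):ℂ) ≠ 0 := Complex.ofReal_ne_zero.mpr Real.pi_ne_zero
    rw [smul_eq_mul, Complex.real_smul]
    push_cast
    field_simp

lemma hardy_hasSum {g : ℂ → ℂ} (hg : DifferentiableOn ℂ g (Metric.ball 0 1))
    {z : ℂ} (hz : z ∈ Metric.ball (0:ℂ) 1) :
    HasSum (fun m : ℕ => cauchyPowerSeries g 0 (1/2) m (fun _ => 1) * z ^ m) (g z) := by
  rw [Metric.mem_ball, dist_zero_right] at hz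
  set r : ℝ := (‖z‖ + 1) / 2 with hr
  have h0 : 0 < r := by positivity
  have h1 : r < 1 := by rw [hr]; linarith
  have hzr : ‖z‖ < r := by rw [hr]; linarith
  have h := hasFPS hg h0 h1
  have hmem : z ∈ EMetric.ball (0:ℂ) (r.toNNReal : ℝ≥0∞) := by
    show z ∈ Metric.eball (0:ℂ) (r.toNNReal : ℝ≥0∞)
    rw [Metric.eball_coe, Metric.mem_ball, dist_zero_right]
    rwa [Real.coe_toNNReal r h0.le]
  have hs := h.hasSum hmem
  rw [zero_add] at hs
  apply HasSum.congr_fun hs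
  intro m
  have hm : (cauchyPowerSeries g 0 r m) (fun _ => z) = z ^ m • (cauchyPowerSeries g 0 r).coeff m :=
    FormalMultilinearSeries.apply_eq_pow_smul_coeff
  rw [hm, cauchy_coeff_indep hg h0 h1, smul_eq_mul]
  show _ = z ^ m * (cauchyPowerSeries g 0 (1/2) m) (fun _ => (1:ℂ))
  exact mul_comm _ _

lemma hardy_boundary_coeff {g : ℂ → ℂ} (hg : DifferentiableOn ℂ g (Metric.ball 0 1))
    {C : ℝ} (hC : ∀ z ∈ Metric.ball (0:ℂ) 1, ‖g z‖ ≤ C)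
    {gb : AddCircle (2*π) → ℂ}
    (hgb : ∀ᵐ θ ∂μT, Tendsto (fun r : ℝ => g ((r:ℂ) * bpt θ)) (𝓝[<] 1) (𝓝 (gb θ)))
    (n : ℤ) :
    fourierCoeff gb n = if 0 ≤ n then cauchyPowerSeries g 0 (1/2) n.toNat (fun _ => 1) else 0 := by
  have hev : ∀ᶠ r in 𝓝[<] (1:ℝ), r ∈ Set.Ioo (0:ℝ) 1 :=
    Ioo_mem_nhdsLT_of_mem (by constructor <;> norm_num)
  have hmaps : ∀ r ∈ Set.Ioo (0:ℝ) 1, ∀ θ : AddCircle (2*π),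
      (r:ℂ) * bpt θ ∈ Metric.ball (0:ℂ) 1 := by
    intro r hr θ
    rw [Metric.mem_ball, dist_zero_right, norm_mul, abs_bpt, mul_one,
      Complex.norm_real, Real.norm_eq_abs, abs_of_pos hr.1]
    exact hr.2
  have hA : Tendsto (fun r : ℝ => ∫ θ, fourier (-n) θ • g ((r:ℂ) * bpt θ) ∂μT) (𝓝[<] (1:ℝ))
      (𝓝 (∫ θ, fourier (-n) θ • gb θ ∂μT)) := by
    apply tendsto_integral_filter_of_dominated_convergence (fun _ => C)
    · filter_upwards [hev] with r hr
      apply Continuous.aestronglyMeasurable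
      apply ((fourier (-n)).continuous).smul
      exact hg.continuousOn.comp_continuous (continuous_const.mul continuous_bpt)
        (fun θ => hmaps r hr θ)
    · filter_upwards [hev] with r hr
      filter_upwards with θ
      rw [norm_smul, abs_fourier, one_mul]
      exact hC _ (hmaps r hr θ)
    · exact integrable_const C
    · filter_upwards [hgb] with θ hθ
      exact hθ.const_smul _
  have hB : Tendsto (fun r : ℝ => ∫ θ, fourier (-n) θ • g ((r:ℂ) * bpt θ) ∂μT) (𝓝[<] (1:ℝ))
      (𝓝 (if 0 ≤ n then cauchyPowerSeries g 0 (1/2) n.toNat (fun _ => (1:ℂ)) else 0)) := by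
    have heq : ∀ᶠ (r : ℝ) in 𝓝[<] (1:ℝ),
        (if 0 ≤ n then cauchyPowerSeries g 0 (1/2) n.toNat (fun _ => 1) * (r:ℂ) ^ n.toNat else 0)
          = ∫ θ, fourier (-n) θ • g ((r:ℂ) * bpt θ) ∂μT := by
      filter_upwards [hev] with r hr
      exact (fourierCoeff_circle hg hr.1 hr.2 n).symm
    apply Tendsto.congr' heq
    by_cases hn : 0 ≤ n
    · simp only [if_pos hn]
      have : Tendsto
          (fun r : ℝ => cauchyPowerSeries g 0 (1/2) n.toNat (fun _ => 1) * (r:ℂ) ^ n.toNat)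
          (𝓝 (1:ℝ))
          (𝓝 (cauchyPowerSeries g 0 (1/2) n.toNat (fun _ => 1) * ((1:ℝ):ℂ) ^ n.toNat)) :=
        (continuous_const.mul ((Complex.continuous_ofReal).pow n.toNat)).tendsto 1
      simpa using this.mono_left nhdsWithin_le_nhds
    · simp only [if_neg hn]
      exact tendsto_const_nhds
  exact tendsto_nhds_unique hA hB

lemma one_sub_mul_ne_zero {a z : ℂ} (ha : ‖a‖ < 1) (hz : ‖z‖ ≤ 1) :
    1 - conj a * z ≠ 0 := by
  intro h
  have h2 : conj a * z = 1 := by linear_combination -h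
  have h3 := congrArg norm h2
  rw [norm_mul, norm_one, Complex.norm_conj] at h3
  nlinarith [norm_nonneg z, norm_nonneg a]

lemma sub_ne_zero_abs {a z : ℂ} (ha : ‖a‖ < 1) (hz : ‖z‖ = 1) :
    z - a ≠ 0 := by
  intro h
  have h2 : z = a := by linear_combination h
  rw [h2] at hz
  linarith

lemma mul_conj_one {z : ℂ} (hz : ‖z‖ = 1) : z * conj z = 1 := by
  rw [Complex.mul_conj, ← Complex.sq_norm, hz]
  norm_num

lemma conj_blaschke {a z : ℂ} (ha : ‖a‖ < 1) (hz : ‖z‖ = 1) :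
    conj ((z - a) / (1 - conj a * z)) = (1 - conj a * z) / (z - a) := by
  have h1 : z * conj z = 1 := mul_conj_one hz
  have hz' : ‖conj z‖ = 1 := by rwa [Complex.norm_conj]
  have hd1 : (1 : ℂ) - a * conj z ≠ 0 := by
    have := one_sub_mul_ne_zero (a := conj a) (z := conj z)
      (by rwa [Complex.norm_conj]) hz'.le
    rwa [conj_conj] at this
  have hd2 : z - a ≠ 0 := sub_ne_zero_abs ha hz
  rw [map_div₀, map_sub, map_sub, map_one, map_mul, conj_conj]
  rw [div_eq_div_iff hd1 hd2]
  linear_combination (1 - conj a * a) * h1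

lemma conj_factor {a z : ℂ} (hz1 : z * conj z = 1) :
    z ^ 2 * conj ((z - a) * (1 - conj a * z)) = (z - a) * (1 - conj a * z) := by
  rw [map_mul, map_sub, map_sub, map_one, map_mul, conj_conj]
  linear_combination (z - a * (z * conj z) - a + a * conj a * z) * hz1

lemma prod_conj_factor {N : ℕ} (a : Fin N → ℂ) {z : ℂ} (hz1 : z * conj z = 1) :
    z ^ (2*N) * ∏ j, conj ((z - a j) * (1 - conj (a j) * z))
      = ∏ j, ((z - a j) * (1 - conj (a j) * z)) := by
  have h1 : ∀ j : Fin N, z ^ 2 * conj ((z - a j) * (1 - conj (a j) * z))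
      = (z - a j) * (1 - conj (a j) * z) := fun j => conj_factor hz1
  calc z ^ (2*N) * ∏ j, conj ((z - a j) * (1 - conj (a j) * z))
      = ∏ j, (z ^ 2 * conj ((z - a j) * (1 - conj (a j) * z))) := by
        rw [Finset.prod_mul_distrib, Finset.prod_const, Finset.card_univ, Fintype.card_fin,
          ← pow_mul]
    _ = ∏ j, ((z - a j) * (1 - conj (a j) * z)) := Finset.prod_congr rfl fun j _ => h1 j

lemma NSymm.coeff_conj' {N : ℕ} {p : Polynomial ℂ} (h : NSymm N p) {m : ℕ} (hm : m ≤ 2 * N) :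
    p.coeff m = conj (p.coeff (2 * N - m)) := by
  have hk := h ((N : ℤ) - m)
  have e1 : (N : ℤ) - ((N : ℤ) - m) = m := by ring
  have e2 : (N : ℤ) + ((N : ℤ) - m) = ((2 * N - m : ℕ) : ℤ) := by push_cast [hm]; omega
  rw [e1, e2] at hk
  unfold coeffZ at hk
  rw [if_pos (by positivity), if_pos (by positivity)] at hk
  simpa using hk

lemma NSymm.coeff_zero' {N : ℕ} {p : Polynomial ℂ} (h : NSymm N p) {m : ℕ} (hm : 2 * N < m) :
    p.coeff m = 0 := by
  have hk := h (((m : ℤ)) - N)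
  have e1 : (N : ℤ) - ((m : ℤ) - N) = 2 * N - m := by ring
  have e2 : (N : ℤ) + ((m : ℤ) - N) = (m : ℤ) := by ring
  rw [e1, e2] at hk
  unfold coeffZ at hk
  rw [if_neg (by omega), if_pos (by positivity)] at hk
  have h1 : conj (p.coeff (m : ℤ).toNat) = 0 := hk.symm
  have h2 := congrArg conj h1
  simpa using h2

lemma NSymm.natDegree_le' {N : ℕ} {p : Polynomial ℂ} (h : NSymm N p) : p.natDegree ≤ 2 * N :=
  Polynomial.natDegree_le_iff_coeff_eq_zero.mpr fun _ hm => h.coeff_zero' hm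

lemma NSymm.conj_eval {N : ℕ} {p : Polynomial ℂ} (h : NSymm N p) {z : ℂ}
    (hz : z * conj z = 1) :
    conj (p.eval z) = conj z ^ (2 * N) * p.eval z := by
  have hdeg : p.natDegree < 2 * N + 1 := by
    have := h.natDegree_le'; omega
  rw [Polynomial.eval_eq_sum_range' hdeg, map_sum]
  have lhs_eq : ∀ i ∈ Finset.range (2 * N + 1),
      conj (p.coeff i * z ^ i) = p.coeff (2 * N - i) * conj z ^ i := by
    intro i hi
    rw [Finset.mem_range] at hi
    rw [map_mul, map_pow]
    congr 1
    have := h.coeff_conj' (m := i) (by omega)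
    rw [this, conj_conj]
  rw [Finset.sum_congr rfl lhs_eq, ← Finset.sum_range_reflect, Finset.mul_sum]
  apply Finset.sum_congr rfl
  intro j hj
  rw [Finset.mem_range] at hj
  have e1 : 2 * N - (2 * N + 1 - 1 - j) = j := by omega
  have e2 : 2 * N + 1 - 1 - j = 2 * N - j := by omega
  rw [e1, e2]
  have e3 : conj z ^ (2 * N) = conj z ^ (2 * N - j) * conj z ^ j := by
    rw [← pow_add]
    congr 1
    omega
  rw [e3]
  have e4 : conj z ^ j * z ^ j = 1 := by
    rw [← mul_pow, mul_comm (conj z) z, hz, one_pow]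
  calc p.coeff j * conj z ^ (2*N - j)
      = p.coeff j * conj z ^ (2*N-j) * (conj z ^ j * z ^ j) := by rw [e4, mul_one]
    _ = conj z ^ (2*N-j) * conj z ^ j * (p.coeff j * z ^ j) := by ring

/-- Let `B` be the finite Blaschke product with zeros `a₁,…,a_N ∈ 𝔻`. A bounded
holomorphic function `ψ` on the disk (with boundary values `ψb`) has `ψ/B`
real-valued a.e. on the circle iff `ψ(z) = p(z) ∏ (1-\bar a_j z)^{-2}` for some
`N`-symmetric polynomial `p`. -/
theorem hinfty_real_quotient_iff (N : ℕ) (a : Fin N → ℂ)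
    (ha : ∀ j, ‖a j‖ < 1)
    (ψ : ℂ → ℂ) (hd : DifferentiableOn ℂ ψ (Metric.ball 0 1))
    (hb : ∃ Cb : ℝ, ∀ z ∈ Metric.ball (0 : ℂ) 1, ‖ψ z‖ ≤ Cb)
    (ψb : AddCircle (2 * π) → ℂ)
    (hψb : ∀ᵐ θ ∂μT, Tendsto (fun r : ℝ => ψ ((r : ℂ) * bpt θ)) (𝓝[<] 1) (𝓝 (ψb θ))) :
    (∀ᵐ θ ∂μT, ∃ t : ℝ,
        ψb θ = (t : ℂ) * ∏ j, (bpt θ - a j) / (1 - conj (a j) * bpt θ)) ↔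
      ∃ p : Polynomial ℂ, NSymm N p ∧
        ∀ z ∈ Metric.ball (0 : ℂ) 1, ψ z = p.eval z * ∏ j, ((1 - conj (a j) * z) ^ 2)⁻¹ := by
  obtain ⟨Cb, hCb⟩ := hb
  set D : ℂ → ℂ := fun z => ∏ j, (1 - conj (a j) * z) with hDdef
  have hball_abs : ∀ z ∈ Metric.ball (0:ℂ) 1, ‖z‖ ≤ 1 := by
    intro z hz
    rw [Metric.mem_ball, dist_zero_right] at hz
    exact hz.le
  have hDne : ∀ z : ℂ, ‖z‖ ≤ 1 → D z ≠ 0 := by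
    intro z hz
    exact Finset.prod_ne_zero_iff.mpr fun j _ => one_sub_mul_ne_zero (ha j) hz
  have hprodD : ∀ z : ℂ, (∏ j, ((1 - conj (a j) * z) ^ 2)⁻¹) = ((D z) ^ 2)⁻¹ := by
    intro z
    simp only [hDdef]
    rw [Finset.prod_inv_distrib, Finset.prod_pow]
  have hDdiff : Differentiable ℂ D := by
    apply Differentiable.fun_finsetProd
    intro j _
    exact (differentiable_const 1).sub (differentiable_id.const_mul _)
  set g : ℂ → ℂ := fun z => ψ z * (D z) ^ 2 with hgdef
  set gb : AddCircle (2*π) → ℂ := fun θ => ψb θ * (D (bpt θ)) ^ 2 with hgbdef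
  have hgd : DifferentiableOn ℂ g (Metric.ball 0 1) :=
    hd.mul ((hDdiff.pow 2).differentiableOn)
  have hCb0 : 0 ≤ Cb := le_trans (norm_nonneg _) (hCb 0 (by simp))
  have hgC : ∀ z ∈ Metric.ball (0:ℂ) 1, ‖g z‖ ≤ Cb * (2^N)^2 := by
    intro z hz
    have hDz : ‖D z‖ ≤ 2 ^ N := by
      rw [hDdef]
      simp only
      rw [norm_prod]
      calc (∏ j, ‖1 - conj (a j) * z‖)
          ≤ ∏ _j : Fin N, (2:ℝ) := by
            apply Finset.prod_le_prod (fun j _ => norm_nonneg _)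
            intro j _
            calc ‖1 - conj (a j) * z‖
                ≤ ‖(1:ℂ)‖ + ‖conj (a j) * z‖ := by
                  exact norm_sub_le (1:ℂ) (conj (a j) * z)
              _ ≤ 2 := by
                  rw [norm_one, norm_mul, Complex.norm_conj]
                  have h1 := (ha j).le
                  have h2 := hball_abs z hz
                  have h3 : ‖a j‖ * ‖z‖ ≤ 1 := by
                    nlinarith [norm_nonneg (a j), norm_nonneg z]
                  linarith
        _ = 2 ^ N := by rw [Finset.prod_const, Finset.card_univ, Fintype.card_fin]
    rw [hgdef]
    simp only
    rw [norm_mul, norm_pow]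
    have := hCb z hz
    have h4 : ‖D z‖ ^ 2 ≤ (2^N)^2 := by
      apply pow_le_pow_left₀ (norm_nonneg _) hDz
    nlinarith [norm_nonneg (ψ z)]
  have hgb : ∀ᵐ θ ∂μT, Tendsto (fun r : ℝ => g ((r:ℂ) * bpt θ)) (𝓝[<] 1) (𝓝 (gb θ)) := by
    filter_upwards [hψb] with θ hθ
    have hcont : Continuous (fun r : ℝ => (D ((r:ℂ) * bpt θ)) ^ 2) :=
      ((hDdiff.continuous.comp (Complex.continuous_ofReal.mul continuous_const)).pow 2)
    have hT : Tendsto (fun r : ℝ => (D ((r:ℂ) * bpt θ)) ^ 2) (𝓝[<] 1)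
        (𝓝 ((D (bpt θ)) ^ 2)) := by
      have := hcont.tendsto 1
      simp only [Complex.ofReal_one, one_mul] at this
      exact this.mono_left nhdsWithin_le_nhds
    exact hθ.mul hT
  constructor
  · -- forward direction
    intro hreal
    set c : ℕ → ℂ := fun m => cauchyPowerSeries g 0 (1/2) m (fun _ => 1) with hcdef
    have hcoeffs : ∀ n : ℤ, fourierCoeff gb n = if 0 ≤ n then c n.toNat else 0 :=
      fun n => hardy_boundary_coeff hgd hgC hgb n
    -- realness of e^{-iNθ} gb
    have hre : ∀ᵐ θ ∂μT, conj (fourier (-(N:ℤ)) θ * gb θ) = fourier (-(N:ℤ)) θ * gb θ := by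
      filter_upwards [hreal] with θ ht
      obtain ⟨t, ht⟩ := ht
      set z := bpt θ with hzdef
      have hz : ‖z‖ = 1 := abs_bpt θ
      have hz1 : z * conj z = 1 := mul_conj_one hz
      have hvne : ∀ j : Fin N, 1 - conj (a j) * z ≠ 0 :=
        fun j => one_sub_mul_ne_zero (ha j) hz.le
      have hgb_eq : gb θ = (t:ℂ) * ∏ j, ((z - a j) * (1 - conj (a j) * z)) := by
        rw [hgbdef]
        simp only
        rw [ht, ← hzdef]
        rw [Finset.prod_div_distrib, Finset.prod_mul_distrib]
        have hprodv : (∏ j, (1 - conj (a j) * z)) ≠ 0 :=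
          Finset.prod_ne_zero_iff.mpr fun j _ => hvne j
        rw [hDdef]
        simp only
        field_simp
      have hfN : fourier (-(N:ℤ)) θ = conj z ^ N := by
        rw [fourier_neg, fourier_npow, map_pow, ← hzdef]
      rw [hgb_eq, hfN]
      rw [map_mul, map_mul, map_pow, conj_conj, Complex.conj_ofReal, map_prod]
      have hP := prod_conj_factor a hz1
      have hzN : z ^ N * conj z ^ N = 1 := by
        rw [← mul_pow, hz1, one_pow]
      linear_combination ((t:ℂ) * conj z ^ N) * hP -
        ((t:ℂ) * z ^ N * (∏ j, conj ((z - a j) * (1 - conj (a j) * z)))) * hzN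
    have hsym : ∀ k : ℤ, fourierCoeff gb ((N:ℤ) + k) = conj (fourierCoeff gb ((N:ℤ) - k)) := by
      intro k
      have h1 : ∀ l : ℤ, fourierCoeff (fun θ => fourier (-(N:ℤ)) θ * gb θ) l
          = fourierCoeff gb (l + N) := by
        intro l
        rw [fourierCoeff_fourier_mul]
        congr 1
        ring
      have h2 : fourierCoeff (fun θ => conj (fourier (-(N:ℤ)) θ * gb θ)) k
          = conj (fourierCoeff (fun θ => fourier (-(N:ℤ)) θ * gb θ) (-k)) :=
        fourierCoeff_conj _ _
      have h3 : fourierCoeff (fun θ => conj (fourier (-(N:ℤ)) θ * gb θ)) k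
          = fourierCoeff (fun θ => fourier (-(N:ℤ)) θ * gb θ) k :=
        fourierCoeff_congr_ae' (by filter_upwards [hre] with θ hθ; simp only [hθ]) k
      have h4 := h3.symm.trans h2
      rw [h1 k, h1 (-k)] at h4
      rw [show (N:ℤ) + k = k + N by ring, show (N:ℤ) - k = -k + N by ring]
      exact h4
    have hczero : ∀ m : ℕ, 2*N < m → c m = 0 := by
      intro m hm
      have h1 := hsym ((m:ℤ) - N)
      rw [show (N:ℤ) + ((m:ℤ) - N) = (m:ℤ) by ring, show (N:ℤ) - ((m:ℤ) - N) = 2*N - m by ring,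
        hcoeffs, hcoeffs] at h1
      rw [if_pos (by positivity), if_neg (by omega)] at h1
      rw [map_zero] at h1
      rwa [Int.toNat_natCast] at h1
    set p : Polynomial ℂ := ∑ m ∈ Finset.range (2*N+1), Polynomial.C (c m) * Polynomial.X ^ m
      with hpdef
    have hpcoeff : ∀ m : ℕ, p.coeff m = c m := by
      intro m
      rw [hpdef, Polynomial.finset_sum_coeff]
      simp only [Polynomial.coeff_C_mul, Polynomial.coeff_X_pow, mul_ite, mul_one, mul_zero]
      rw [Finset.sum_ite_eq (Finset.range (2*N+1)) m c]
      by_cases hm : m ∈ Finset.range (2*N+1)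
      · rw [if_pos hm]
      · rw [if_neg hm]
        rw [Finset.mem_range] at hm
        exact (hczero m (by omega)).symm
    have hcoeffZ : ∀ j : ℤ, coeffZ p j = fourierCoeff gb j := by
      intro j
      unfold coeffZ
      rw [hcoeffs j]
      by_cases hj : 0 ≤ j
      · rw [if_pos hj, if_pos hj, hpcoeff]
      · rw [if_neg hj, if_neg hj]
    have hNS : NSymm N p := by
      intro k
      rw [hcoeffZ, hcoeffZ]
      have := hsym k
      have h5 := congrArg conj this
      rw [conj_conj] at h5
      exact h5.symm
    refine ⟨p, hNS, fun z hz => ?_⟩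
    have heval : g z = p.eval z := by
      have hs1 := hardy_hasSum hgd hz
      have hs2 : HasSum (fun m : ℕ => c m * z ^ m) (p.eval z) := by
        have hz0 : ∀ m ∉ Finset.range (2*N+1), c m * z ^ m = 0 := by
          intro m hm
          rw [Finset.mem_range] at hm
          rw [hczero m (by omega), zero_mul]
        have : HasSum (fun m : ℕ => c m * z ^ m) (∑ m ∈ Finset.range (2*N+1), c m * z ^ m) :=
          hasSum_sum_of_ne_finset_zero hz0
        convert this using 1
        rw [hpdef]
        rw [Polynomial.eval_finset_sum]
        apply Finset.sum_congr rfl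
        intro m _
        simp
      exact hs1.unique hs2
    have hDz : D z ≠ 0 := hDne z (hball_abs z hz)
    rw [hprodD]
    have : ψ z * (D z) ^ 2 = p.eval z := heval
    field_simp
    linear_combination this
  · -- backward direction
    rintro ⟨p, hNS, hpψ⟩
    have hform : ∀ w ∈ Metric.ball (0:ℂ) 1, ψ w = p.eval w * ((D w) ^ 2)⁻¹ := by
      intro w hw
      rw [hpψ w hw, hprodD]
    filter_upwards [hψb] with θ hθ
    set z := bpt θ with hzdef
    have hz : ‖z‖ = 1 := abs_bpt θ
    have hz1 : z * conj z = 1 := mul_conj_one hz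
    have hvne : ∀ j : Fin N, 1 - conj (a j) * z ≠ 0 :=
      fun j => one_sub_mul_ne_zero (ha j) hz.le
    have hune : ∀ j : Fin N, z - a j ≠ 0 := fun j => sub_ne_zero_abs (ha j) hz
    have hDz : D z ≠ 0 := hDne z hz.le
    set A : ℂ := ∏ j, (z - a j) with hAdef
    have hAne : A ≠ 0 := Finset.prod_ne_zero_iff.mpr fun j _ => hune j
    -- boundary value of ψ
    have hval : ψb θ = p.eval z * ((D z) ^ 2)⁻¹ := by
      have hcont : ContinuousAt (fun w : ℂ => p.eval w * ((D w) ^ 2)⁻¹) z := by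
        apply ContinuousAt.mul (p.continuous.continuousAt)
        exact ContinuousAt.inv₀ ((hDdiff.continuous.pow 2).continuousAt)
          (pow_ne_zero 2 hDz)
      have hpath : Tendsto (fun r : ℝ => (r:ℂ) * z) (𝓝[<] (1:ℝ)) (𝓝 z) := by
        have hc : Continuous (fun r : ℝ => (r:ℂ) * z) :=
          Complex.continuous_ofReal.mul continuous_const
        have := hc.tendsto (1:ℝ)
        simp only [Complex.ofReal_one, one_mul] at this
        exact this.mono_left nhdsWithin_le_nhds
      have hT : Tendsto (fun r : ℝ => ψ ((r:ℂ) * z)) (𝓝[<] (1:ℝ))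
          (𝓝 (p.eval z * ((D z) ^ 2)⁻¹)) := by
        have hT0 := hcont.tendsto.comp hpath
        apply hT0.congr'
        filter_upwards [Ioo_mem_nhdsLT_of_mem
          (by constructor <;> norm_num : (1:ℝ) ∈ Set.Ioc (0:ℝ) 1)] with r hr
        have hmem : (r:ℂ) * z ∈ Metric.ball (0:ℂ) 1 := by
          rw [Metric.mem_ball, dist_zero_right, norm_mul, hz, mul_one,
            Complex.norm_real, Real.norm_eq_abs, abs_of_pos hr.1]
          exact hr.2
        exact (hform _ hmem).symm
      exact tendsto_nhds_unique hθ hT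
    -- the candidate real value
    set Bp : ℂ := ∏ j, (z - a j) / (1 - conj (a j) * z) with hBpdef
    have hconjB : conj Bp = ∏ j, (1 - conj (a j) * z) / (z - a j) := by
      rw [hBpdef, map_prod]
      exact Finset.prod_congr rfl fun j _ => conj_blaschke (ha j) hz
    have hBB : Bp * conj Bp = 1 := by
      rw [hconjB, hBpdef, ← Finset.prod_mul_distrib]
      have hone : ∀ j ∈ (Finset.univ : Finset (Fin N)),
          (z - a j) / (1 - conj (a j) * z) * ((1 - conj (a j) * z) / (z - a j)) = 1 := by
        intro j _
        rw [div_mul_div_comm, div_eq_one_iff_eq (mul_ne_zero (hvne j) (hune j))]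
        ring
      rw [Finset.prod_congr rfl hone, Finset.prod_const_one]
    set w : ℂ := ψb θ * conj Bp with hwdef
    set E : ℂ := D z * A with hEdef
    have hEne : E ≠ 0 := mul_ne_zero hDz hAne
    have hBpAD : Bp = A / D z := by
      rw [hBpdef, hAdef, hDdef, Finset.prod_div_distrib]
    have hconjE : z ^ (2*N) * conj E = E := by
      have hE2 : E = ∏ j, ((z - a j) * (1 - conj (a j) * z)) := by
        simp only [hEdef, hAdef, hDdef, ← Finset.prod_mul_distrib]
        exact Finset.prod_congr rfl fun j _ => by ring
      rw [hE2, map_prod]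
      exact prod_conj_factor a hz1
    have hwE : w * E = p.eval z := by
      rw [hwdef, hval, hconjB, hEdef, hDdef, hAdef, Finset.prod_div_distrib]
      have hprodu : (∏ j, (z - a j)) ≠ 0 := Finset.prod_ne_zero_iff.mpr fun j _ => hune j
      have hprodv : (∏ j, (1 - conj (a j) * z)) ≠ 0 :=
        Finset.prod_ne_zero_iff.mpr fun j _ => hvne j
      field_simp
      ring
    have hwreal : conj w = w := by
      have hcp : conj (p.eval z) = conj z ^ (2*N) * p.eval z := hNS.conj_eval hz1
      have hcwE : conj w * conj E = conj z ^ (2*N) * p.eval z := by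
        rw [← map_mul, hwE, hcp]
      have hzcz : z ^ (2*N) * conj z ^ (2*N) = 1 := by
        rw [← mul_pow, hz1, one_pow]
      have key : conj w * E = w * E := by
        calc conj w * E = conj w * (z ^ (2*N) * conj E) := by rw [hconjE]
          _ = z ^ (2*N) * (conj w * conj E) := by ring
          _ = z ^ (2*N) * (conj z ^ (2*N) * p.eval z) := by rw [hcwE]
          _ = (z ^ (2*N) * conj z ^ (2*N)) * p.eval z := by ring
          _ = p.eval z := by rw [hzcz, one_mul]
          _ = w * E := hwE.symm
      exact mul_right_cancel₀ hEne key
    refine ⟨w.re, ?_⟩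
    have hwre : ((w.re : ℝ) : ℂ) = w := by
      have := Complex.conj_eq_iff_re.mp hwreal
      exact this
    calc ψb θ = ψb θ * (Bp * conj Bp) := by rw [hBB, mul_one]
      _ = w * Bp := by rw [hwdef]; ring
      _ = (w.re : ℂ) * Bp := by rw [hwre]
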